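/- Let ε > 0, let A_l = (a_{ij}) and B = (b_{ij}) be 2×2 complex matrices, and let A_r = I₂ be the 2×2 identity matrix (the Schubert cell 𝒞_{3,4} form). Then the constraint equations (E1) and (E2) both hold if and only if Im(a₁₁) = 0, Im(a₂₂) = 0, a₂₁ = ε⁻¹ − conj(a₁₂), Re(b₁₁) = 0, Re(b₂₂) = 0, and b₂₁ = conj(b₁₂). (This is the classification of class 𝔄_{3,4} self-adjoint boundary conditions.) -/

import Mathlib

open Matrix

lemma ct_fin_two (a b c d : ℂ) :
    (!![a, b; c, d])ᴴ = !![star a, star c; star b, star d] := by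
  ext i j; fin_cases i <;> fin_cases j <;> simp [conjTranspose_apply]

lemma aux_cancel {ε x : ℝ} (hε : 0 < ε) (h : ε * x = 0) : x = 0 := by
  rcases mul_eq_zero.mp h with h' | h'
  · exact absurd h' hε.ne'
  · exact h'

/-- Classification of class `𝔄_{3,4}` self-adjoint boundary conditions. -/
theorem stmt8 (ε : ℝ) (hε : 0 < ε)
    (Al B : Matrix (Fin 2) (Fin 2) ℂ)
    (Ω₁ Ω₂ : Matrix (Fin 2) (Fin 2) ℂ)
    (hΩ₁ : Ω₁ = !![(ε : ℂ), 0; 0, -(ε : ℂ)]) (hΩ₂ : Ω₂ = !![0, -1; 1, 0])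
    (Ar : Matrix (Fin 2) (Fin 2) ℂ) (hAr : Ar = 1) :
    (-(Al * Ω₁ * Arᴴ) + Ar * Ω₁ * Alᴴ + Ar * Ω₂ * Arᴴ = 0 ∧
      B * Ω₁ * Arᴴ + Ar * Ω₁ * Bᴴ = 0) ↔
    ((Al 0 0).im = 0 ∧ (Al 1 1).im = 0 ∧ Al 1 0 = ((ε : ℂ))⁻¹ - (starRingEnd ℂ) (Al 0 1) ∧
      (B 0 0).re = 0 ∧ (B 1 1).re = 0 ∧ B 1 0 = (starRingEnd ℂ) (B 0 1)) := by
  subst hΩ₁ hΩ₂ hAr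
  have hε0 : ε ≠ 0 := hε.ne'
  rw [Matrix.eta_fin_two Al, Matrix.eta_fin_two B]
  simp only [conjTranspose_one, mul_one, one_mul, ct_fin_two, Matrix.mul_fin_two]
  simp only [← Matrix.ext_iff, Fin.forall_fin_two]
  simp [Complex.ext_iff, Complex.mul_re, Complex.mul_im, Complex.inv_re, Complex.inv_im,
    Complex.normSq_ofReal, Complex.div_re, Complex.div_im]
  constructor
  · rintro ⟨⟨⟨⟨-, h1⟩, h2, h3⟩, ⟨h4, h5⟩, -, h6⟩, ⟨⟨h7, -⟩, h8, h9⟩, ⟨h10, h11⟩, h12, -⟩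
    have key : ∀ x : ℝ, ε * x = 0 → x = 0 := fun x => aux_cancel hε
    refine ⟨key _ (by linarith), key _ (by linarith), ⟨?_, ?_⟩,
      key _ (by linarith), key _ (by linarith), ?_, ?_⟩
    · field_simp; linarith
    · have := key ((Al 1 0).im - (Al 0 1).im) (by ring_nf; linarith)
      linarith
    · have := key ((B 1 0).re - (B 0 1).re) (by ring_nf; linarith)
      linarith
    · have := key ((B 1 0).im + (B 0 1).im) (by ring_nf; linarith)
      linarith
  · rintro ⟨h1, h2, ⟨h3a, h3b⟩, h4, h5, h6a, h6b⟩
    refine ⟨⟨⟨⟨?_, ?_⟩, ?_, ?_⟩, ⟨?_, ?_⟩, ?_, ?_⟩, ⟨⟨?_, ?_⟩, ?_, ?_⟩, ⟨?_, ?_⟩, ?_, ?_⟩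
    all_goals try simp [h1, h2, h3a, h3b, h4, h5, h6a, h6b, mul_sub, mul_inv_cancel₀ hε0]
    all_goals try ring
    all_goals field_simp
    all_goals norm_num
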